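/- Every square matrix of order n in which every symbol appears at most (n−1)/(4e) times has a Latin transversal, i.e., a set of n cells, one in each row and one in each column, containing pairwise distinct symbols. -/

import Mathlib

open Finset

namespace ES16

variable {n : ℕ}

/-! ### Events and avoidance -/

def Occ (e : (Fin n × Fin n) × (Fin n × Fin n)) (σ : Equiv.Perm (Fin n)) : Prop :=
  σ e.1.1 = e.1.2 ∧ σ e.2.1 = e.2.2

instance (e : (Fin n × Fin n) × (Fin n × Fin n)) : DecidablePred (Occ e) :=
  fun _ => instDecidableAnd

def Avoid (F : Finset ((Fin n × Fin n) × (Fin n × Fin n))) : Finset (Equiv.Perm (Fin n)) :=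
  univ.filter (fun σ => ∀ e ∈ F, ¬ Occ e σ)

lemma mem_avoid {F : Finset ((Fin n × Fin n) × (Fin n × Fin n))} {σ : Equiv.Perm (Fin n)} :
    σ ∈ Avoid F ↔ ∀ e ∈ F, ¬ Occ e σ := by simp [Avoid]

lemma avoid_anti {F G : Finset ((Fin n × Fin n) × (Fin n × Fin n))} (h : F ⊆ G) :
    Avoid G ⊆ Avoid F := by
  intro σ hσ
  rw [mem_avoid] at *
  exact fun e he => hσ e (h he)

lemma avoid_insert (f : (Fin n × Fin n) × (Fin n × Fin n))
    (F : Finset ((Fin n × Fin n) × (Fin n × Fin n))) :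
    Avoid (insert f F) = (Avoid F).filter (fun σ => ¬ Occ f σ) := by
  ext σ
  simp only [mem_avoid, mem_filter, mem_avoid, Finset.mem_insert]
  constructor
  · exact fun h => ⟨fun e he => h e (Or.inr he), h f (Or.inl rfl)⟩
  · rintro ⟨h1, h2⟩ e (rfl | he)
    · exact h2
    · exact h1 e he

/-! ### The swapping construction -/

lemma exists_c {j j' u v : Fin n} (hjj : j ≠ j') (huv : u ≠ v) :
    ∃ c : Equiv.Perm (Fin n), c j = u ∧ c j' = v ∧
      ∀ x, x ≠ j → x ≠ j' → x ≠ u → x ≠ v → c x = x := by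
  set w := Equiv.swap j' v with hw
  refine ⟨(Equiv.swap (w j) u) * w, ?_, ?_, ?_⟩
  · simp [Equiv.Perm.mul_apply]
  · have h1 : w j' = v := Equiv.swap_apply_left _ _
    have h2 : v ≠ w j := by
      intro hv
      apply hjj
      have : w v = w (w j) := congrArg w hv
      rw [Equiv.swap_apply_right, Equiv.swap_apply_self] at this
      exact this.symm
    simp only [Equiv.Perm.mul_apply, h1]
    exact Equiv.swap_apply_of_ne_of_ne h2 huv.symm
  · intro x h1 h2 h3 h4
    have hwx : w x = x := Equiv.swap_apply_of_ne_of_ne h2 h4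
    have hwj : w j = j ∨ w j = j' := by
      rcases eq_or_ne j v with rfl | hjv
      · right; exact Equiv.swap_apply_right _ _
      · left; exact Equiv.swap_apply_of_ne_of_ne hjj hjv
    have hx : x ≠ w j := by rcases hwj with hh | hh <;> rw [hh] <;> assumption
    simp only [Equiv.Perm.mul_apply, hwx]
    exact Equiv.swap_apply_of_ne_of_ne hx h3

lemma c_maps {c : Equiv.Perm (Fin n)} {j j' u v : Fin n}
    (hcj : c j = u) (hcj' : c j' = v)
    (hfix : ∀ x, x ≠ j → x ≠ j' → x ≠ u → x ≠ v → c x = x)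
    {x : Fin n} (hxj : x ≠ j) (hxj' : x ≠ j') (hne : c x ≠ x) :
    c x = j ∨ c x = j' := by
  by_contra hc
  push_neg at hc
  have h1 : c x ≠ u := fun hh => hxj (c.injective (hh.trans hcj.symm))
  have h2 : c x ≠ v := fun hh => hxj' (c.injective (hh.trans hcj'.symm))
  exact hne (c.injective (hfix (c x) hc.1 hc.2 h1 h2))

/-! ### The swap lemma (lopsided condition) -/

lemma swap_lemma {i i' j j' : Fin n} (hjj : j ≠ j')
    (F : Finset ((Fin n × Fin n) × (Fin n × Fin n)))
    (hF : ∀ f ∈ F, (f.1.1 ≠ i ∧ f.1.1 ≠ i' ∧ f.1.2 ≠ j ∧ f.1.2 ≠ j') ∧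
                   (f.2.1 ≠ i ∧ f.2.1 ≠ i' ∧ f.2.2 ≠ j ∧ f.2.2 ≠ j')) :
    ((univ : Finset (Fin n)).offDiag.card) *
      ((Avoid F).filter (Occ ((i,j),(i',j')))).card ≤ (Avoid F).card := by
  classical
  set B := (Avoid F).filter (Occ ((i,j),(i',j'))) with hB
  set C : Fin n × Fin n → Finset (Equiv.Perm (Fin n)) :=
    fun z => (Avoid F).filter (fun σ => σ i = z.1 ∧ σ i' = z.2) with hC
  have key : ∀ z ∈ (univ : Finset (Fin n)).offDiag, B.card ≤ (C z).card := by
    rintro ⟨u, v⟩ hz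
    obtain ⟨-, -, huv⟩ := Finset.mem_offDiag.mp hz
    obtain ⟨c, hcj, hcj', hfix⟩ := exists_c hjj huv
    apply Finset.card_le_card_of_injOn (fun σ => c * σ)
    · intro σ hσ
      rw [hB, Finset.mem_coe, mem_filter] at hσ
      obtain ⟨hav, hij, hij'⟩ := hσ
      simp only [Occ] at hij hij'
      have claim : ∀ p q : Fin n, p ≠ i → p ≠ i' → q ≠ j → q ≠ j' →
          (c * σ) p = q → σ p = q := by
        intro p q hpi hpi' hqj hqj' hcq
        simp only [Equiv.Perm.mul_apply] at hcq
        have hxj : σ p ≠ j := fun hh => hpi (σ.injective (hh.trans hij.symm))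
        have hxj' : σ p ≠ j' := fun hh => hpi' (σ.injective (hh.trans hij'.symm))
        by_cases hcx : c (σ p) = σ p
        · rw [hcx] at hcq; exact hcq
        · rcases c_maps hcj hcj' hfix hxj hxj' hcx with hh | hh <;>
            rw [hcq] at hh
          · exact absurd hh hqj
          · exact absurd hh hqj'
      rw [hC, Finset.mem_coe, mem_filter]
      refine ⟨?_, ?_, ?_⟩
      · rw [mem_avoid]
        intro f hf hocc
        obtain ⟨⟨r1, r2, q1, q2⟩, ⟨r3, r4, q3, q4⟩⟩ := hF f hf
        obtain ⟨h1, h2⟩ := hocc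
        rw [mem_avoid] at hav
        exact hav f hf ⟨claim f.1.1 f.1.2 r1 r2 q1 q2 h1,
                        claim f.2.1 f.2.2 r3 r4 q3 q4 h2⟩
      · simp [Equiv.Perm.mul_apply, hij, hcj]
      · simp [Equiv.Perm.mul_apply, hij', hcj']
    · intro a _ b _ hab
      exact mul_left_cancel hab
  have hdisj : (Set.PairwiseDisjoint
      ((univ : Finset (Fin n)).offDiag : Set (Fin n × Fin n)) C) := by
    intro z _ z' _ hne
    simp only [Function.onFun]
    rw [Finset.disjoint_left]
    intro σ hσ hσ'
    rw [hC] at hσ hσ'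
    simp only [mem_filter] at hσ hσ'
    exact hne (Prod.ext (hσ.2.1.symm.trans hσ'.2.1) (hσ.2.2.symm.trans hσ'.2.2))
  calc ((univ : Finset (Fin n)).offDiag.card) * B.card
      = ∑ _z ∈ (univ : Finset (Fin n)).offDiag, B.card := by
        rw [Finset.sum_const, smul_eq_mul]
    _ ≤ ∑ z ∈ (univ : Finset (Fin n)).offDiag, (C z).card := Finset.sum_le_sum key
    _ = ((univ : Finset (Fin n)).offDiag.biUnion C).card :=
        (Finset.card_biUnion hdisj).symm
    _ ≤ (Avoid F).card := by
        apply Finset.card_le_card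
        intro σ hσ
        rw [Finset.mem_biUnion] at hσ
        obtain ⟨z, _, hz⟩ := hσ
        rw [hC] at hz
        exact (mem_filter.mp hz).1

/-! ### Neighbours and counting -/

def InLines (e : (Fin n × Fin n) × (Fin n × Fin n)) (c : Fin n × Fin n) : Prop :=
  c.1 = e.1.1 ∨ c.1 = e.2.1 ∨ c.2 = e.1.2 ∨ c.2 = e.2.2

instance (e : (Fin n × Fin n) × (Fin n × Fin n)) : DecidablePred (InLines e) := by
  unfold InLines; infer_instance

def Nbr (e f : (Fin n × Fin n) × (Fin n × Fin n)) : Prop :=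
  InLines e f.1 ∨ InLines e f.2

instance (e : (Fin n × Fin n) × (Fin n × Fin n)) : DecidablePred (Nbr e) := by
  unfold Nbr; infer_instance

variable {S : Type*} [DecidableEq S]

variable (A : Fin n → Fin n → S)

def VC : Finset ((Fin n × Fin n) × (Fin n × Fin n)) :=
  univ.filter (fun e => e.1.1 < e.2.1 ∧ e.1.2 ≠ e.2.2 ∧ A e.1.1 e.1.2 = A e.2.1 e.2.2)

def cls (s : S) : Finset (Fin n × Fin n) := univ.filter (fun c => A c.1 c.2 = s)

lemma lines_card (e : (Fin n × Fin n) × (Fin n × Fin n)) :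
    (univ.filter (InLines e)).card ≤ 4 * n := by
  have hsub : univ.filter (InLines e) ⊆
      ((({e.1.1} ×ˢ univ) ∪ ({e.2.1} ×ˢ univ)) ∪
       ((univ ×ˢ {e.1.2}) ∪ (univ ×ˢ {e.2.2}))) := by
    intro c hc
    rw [mem_filter] at hc
    simp only [Finset.mem_union, Finset.mem_product, Finset.mem_singleton, Finset.mem_univ,
      and_true, true_and]
    rcases hc.2 with h | h | h | h
    · exact Or.inl (Or.inl h)
    · exact Or.inl (Or.inr h)
    · exact Or.inr (Or.inl h)
    · exact Or.inr (Or.inr h)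
  calc (univ.filter (InLines e)).card ≤ _ := Finset.card_le_card hsub
    _ ≤ (({e.1.1} ×ˢ (univ : Finset (Fin n))) ∪ ({e.2.1} ×ˢ univ)).card
        + (((univ : Finset (Fin n)) ×ˢ {e.1.2}) ∪ (univ ×ˢ {e.2.2})).card :=
        Finset.card_union_le _ _
    _ ≤ (({e.1.1} ×ˢ (univ : Finset (Fin n))).card + ({e.2.1} ×ˢ (univ : Finset (Fin n))).card)
        + (((univ : Finset (Fin n)) ×ˢ ({e.1.2} : Finset (Fin n))).card
          + ((univ : Finset (Fin n)) ×ˢ ({e.2.2} : Finset (Fin n))).card) :=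
        Nat.add_le_add (Finset.card_union_le _ _) (Finset.card_union_le _ _)
    _ ≤ 4 * n := by
        simp [Finset.card_product]
        omega

lemma nbr_count (e : (Fin n × Fin n) × (Fin n × Fin n)) (Δ : ℝ)
    (hΔ : ∀ s, ((cls A s).card : ℝ) ≤ Δ) (hΔ1 : 1 ≤ Δ) :
    ((((VC A).filter (Nbr e)).card : ℝ)) ≤ 4 * n * (Δ - 1) := by
  classical
  set Lines := univ.filter (InLines e) with hL
  set T : Finset ((Fin n × Fin n) × (Fin n × Fin n)) :=
    Lines.biUnion (fun a => {a} ×ˢ ((cls A (A a.1 a.2)).erase a)) with hT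
  have hcard : ((VC A).filter (Nbr e)).card ≤ T.card := by
    apply Finset.card_le_card_of_injOn
      (fun f => if InLines e f.1 then (f.1, f.2) else (f.2, f.1))
    · intro f hf
      rw [Finset.mem_coe, mem_filter] at hf
      obtain ⟨hfvc, hnbr⟩ := hf
      rw [VC, mem_filter] at hfvc
      obtain ⟨-, hlt, -, hsym⟩ := hfvc
      have hne12 : f.2 ≠ f.1 := by
        intro hh; rw [hh] at hlt; exact lt_irrefl _ hlt
      by_cases h1 : InLines e f.1
      · simp only [h1, if_pos]
        rw [hT, Finset.mem_coe, Finset.mem_biUnion]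
        refine ⟨f.1, by rw [hL, mem_filter]; exact ⟨mem_univ _, h1⟩, ?_⟩
        rw [Finset.mem_product]
        refine ⟨Finset.mem_singleton_self _, Finset.mem_erase.mpr ⟨hne12, ?_⟩⟩
        rw [cls, mem_filter]
        exact ⟨mem_univ _, hsym.symm⟩
      · have h2 : InLines e f.2 := hnbr.resolve_left h1
        simp only [h1, if_neg, not_false_iff]
        rw [hT, Finset.mem_coe, Finset.mem_biUnion]
        refine ⟨f.2, by rw [hL, mem_filter]; exact ⟨mem_univ _, h2⟩, ?_⟩
        rw [Finset.mem_product]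
        refine ⟨Finset.mem_singleton_self _, Finset.mem_erase.mpr ⟨hne12.symm, ?_⟩⟩
        rw [cls, mem_filter]
        exact ⟨mem_univ _, hsym⟩
    · intro f1 hf1 f2 hf2 hff
      rw [Finset.mem_coe, mem_filter, VC, mem_filter] at hf1 hf2
      have hlt1 := hf1.1.2.1
      have hlt2 := hf2.1.2.1
      by_cases h1 : InLines e f1.1 <;> by_cases h2 : InLines e f2.1 <;>
        simp only [h1, h2, if_pos, if_neg, not_false_iff, Prod.mk.injEq] at hff
      · exact Prod.ext hff.1 hff.2
      · exfalso
        have e1 : f1.1.1 = f2.2.1 := congrArg Prod.fst hff.1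
        have e2 : f1.2.1 = f2.1.1 := congrArg Prod.fst hff.2
        exact lt_irrefl _ (((e1 ▸ hlt1 : (f2.2.1 : Fin n) < f1.2.1).trans_eq e2).trans hlt2)
      · exfalso
        have e1 : f1.2.1 = f2.1.1 := congrArg Prod.fst hff.1
        have e2 : f1.1.1 = f2.2.1 := congrArg Prod.fst hff.2
        exact lt_irrefl _ (((e2 ▸ hlt1 : (f2.2.1 : Fin n) < f1.2.1).trans_eq e1).trans hlt2)
      · exact Prod.ext hff.2 hff.1
  have hT2 : (T.card : ℝ) ≤ (Lines.card : ℝ) * (Δ - 1) := by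
    have h1 : T.card ≤ ∑ a ∈ Lines, ({a} ×ˢ ((cls A (A a.1 a.2)).erase a)).card :=
      Finset.card_biUnion_le
    have h2 : ∀ a ∈ Lines, ((({a} ×ˢ ((cls A (A a.1 a.2)).erase a)).card : ℝ)) ≤ Δ - 1 := by
      intro a _
      have hmem : a ∈ cls A (A a.1 a.2) := by rw [cls, mem_filter]; exact ⟨mem_univ _, rfl⟩
      have hpos : 1 ≤ (cls A (A a.1 a.2)).card := Finset.card_pos.mpr ⟨a, hmem⟩
      rw [Finset.card_product, Finset.card_singleton, one_mul,
        Finset.card_erase_of_mem hmem]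
      have := hΔ (A a.1 a.2)
      rw [Nat.cast_sub hpos]
      push_cast
      linarith
    calc (T.card : ℝ) ≤ ∑ a ∈ Lines, ((({a} ×ˢ ((cls A (A a.1 a.2)).erase a)).card : ℝ)) := by
          exact_mod_cast Nat.cast_le.mpr h1 |>.trans (by push_cast; exact le_refl _)
      _ ≤ ∑ _a ∈ Lines, (Δ - 1) := Finset.sum_le_sum h2
      _ = (Lines.card : ℝ) * (Δ - 1) := by rw [Finset.sum_const, nsmul_eq_mul]
  have hL4 : (Lines.card : ℝ) ≤ 4 * n := by exact_mod_cast lines_card e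
  calc ((((VC A).filter (Nbr e)).card : ℝ)) ≤ (T.card : ℝ) := by exact_mod_cast hcard
    _ ≤ (Lines.card : ℝ) * (Δ - 1) := hT2
    _ ≤ 4 * n * (Δ - 1) := by
        apply mul_le_mul_of_nonneg_right hL4
        linarith

/-! ### Numerics -/

noncomputable def X (n : ℕ) : ℝ := Real.exp 1 / ((n : ℝ) * ((n : ℝ) - 1))

lemma X_pos (hn : 12 ≤ n) : 0 < X n := by
  have h12 : (12 : ℝ) ≤ (n : ℝ) := by exact_mod_cast hn
  have : (0:ℝ) < (n : ℝ) * ((n : ℝ) - 1) := by nlinarith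
  exact div_pos (Real.exp_pos 1) this

lemma X_lt_one (hn : 12 ≤ n) : X n < 1 := by
  have h12 : (12 : ℝ) ≤ (n : ℝ) := by exact_mod_cast hn
  have hprod : (132:ℝ) ≤ (n : ℝ) * ((n : ℝ) - 1) := by nlinarith
  have hE : Real.exp 1 < 3 := by
    have := Real.exp_one_lt_d9; linarith
  rw [X, div_lt_one (by linarith)]
  linarith

lemma pow_bound (hn : 12 ≤ n) {m : ℕ}
    (hm : (m : ℝ) ≤ (n : ℝ) * ((n : ℝ) - 1) / Real.exp 1 - 4 * n) :
    Real.exp (-1) ≤ (1 - X n) ^ m := by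
  have h12 : (12 : ℝ) ≤ (n : ℝ) := by exact_mod_cast hn
  have hprod : (132:ℝ) ≤ (n : ℝ) * ((n : ℝ) - 1) := by nlinarith
  have hprodpos : (0:ℝ) < (n : ℝ) * ((n : ℝ) - 1) := by linarith
  have hx0 := X_pos hn
  have hx1 := X_lt_one hn
  have h1x : (0:ℝ) < 1 - X n := by linarith
  have hmx : (m : ℝ) * X n ≤ 1 - X n := by
    have hXmul : ((n : ℝ) * ((n : ℝ) - 1) / Real.exp 1) * X n = 1 := by
      rw [X]; field_simp; exact div_self (ne_of_gt (by linarith))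
    have h4n : (4 * (n:ℝ)) * X n ≥ X n := by nlinarith
    have := mul_le_mul_of_nonneg_right hm hx0.le
    nlinarith
  set t := X n / (1 - X n) with ht
  have htpos : 0 ≤ t := div_nonneg hx0.le h1x.le
  have hexp : Real.exp (-t) ≤ 1 - X n := by
    have h1 : 1 / (1 - X n) ≤ Real.exp t := by
      have := Real.add_one_le_exp t
      have heq : t + 1 = 1 / (1 - X n) := by rw [ht]; field_simp; ring
      linarith
    rw [Real.exp_neg]
    calc (Real.exp t)⁻¹ ≤ (1 / (1 - X n))⁻¹ := by
          apply inv_anti₀ (by positivity) h1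
      _ = 1 - X n := by rw [one_div, inv_inv]
  have hmt : (m : ℝ) * t ≤ 1 := by
    rw [ht, ← mul_div_assoc, div_le_one h1x]
    exact hmx
  calc Real.exp (-1) ≤ Real.exp ((m : ℝ) * (-t)) := by
        apply Real.exp_le_exp.mpr; nlinarith
    _ = (Real.exp (-t)) ^ m := by
        rw [← Real.exp_nat_mul]
    _ ≤ (1 - X n) ^ m := by
        apply pow_le_pow_left₀ (Real.exp_pos _).le hexp

lemma offdiag_card_real (hn : 12 ≤ n) :
    (((univ : Finset (Fin n)).offDiag.card : ℝ)) = (n : ℝ) * ((n : ℝ) - 1) := by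
  rw [Finset.offDiag_card, Finset.card_univ, Fintype.card_fin]
  have hle : n ≤ n * n := Nat.le_mul_of_pos_left n (by omega)
  push_cast [Nat.cast_sub hle]
  ring

/-! ### The local lemma induction -/

lemma step (hn : 12 ≤ n)
    (h : ∀ s, ((cls A s).card : ℝ) ≤ ((n : ℝ) - 1) / (4 * Real.exp 1))
    (F : Finset ((Fin n × Fin n) × (Fin n × Fin n))) (hFsub : F ⊆ VC A)
    (ih : ∀ G : Finset ((Fin n × Fin n) × (Fin n × Fin n)), G ⊆ VC A → G.card < F.card →
      0 < (Avoid G).card ∧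
        ∀ e ∈ VC A, (((Avoid G).filter (Occ e)).card : ℝ) ≤ X n * ((Avoid G).card : ℝ)) :
    0 < (Avoid F).card ∧
      ∀ e ∈ VC A, (((Avoid F).filter (Occ e)).card : ℝ) ≤ X n * ((Avoid F).card : ℝ) := by
  classical
  have hx0 := X_pos hn
  have hx1 := X_lt_one hn
  have h12 : (12 : ℝ) ≤ (n : ℝ) := by exact_mod_cast hn
  have hprodpos : (0:ℝ) < (n : ℝ) * ((n : ℝ) - 1) := by nlinarith
  -- the conditional probability bound, for any event e ∈ VC A
  have bound : ∀ e ∈ VC A, (((Avoid F).filter (Occ e)).card : ℝ) ≤ X n * ((Avoid F).card : ℝ) := by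
    rintro ⟨⟨i, j⟩, ⟨i', j'⟩⟩ he
    rw [VC, mem_filter] at he
    obtain ⟨-, hlt, hjj, -⟩ := he
    set e : (Fin n × Fin n) × (Fin n × Fin n) := ((i, j), (i', j')) with hedef
    set F1 := F.filter (Nbr e) with hF1
    set F2 := F.filter (fun f => ¬ Nbr e f) with hF2
    have hF2F : F2 ⊆ F := filter_subset _ _
    have hF1F : F1 ⊆ F := filter_subset _ _
    -- swap lemma for F2
    have hF2cond : ∀ f ∈ F2, (f.1.1 ≠ i ∧ f.1.1 ≠ i' ∧ f.1.2 ≠ j ∧ f.1.2 ≠ j') ∧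
        (f.2.1 ≠ i ∧ f.2.1 ≠ i' ∧ f.2.2 ≠ j ∧ f.2.2 ≠ j') := by
      intro f hf
      rw [hF2, mem_filter] at hf
      have hnb := hf.2
      rw [Nbr] at hnb
      push_neg at hnb
      obtain ⟨hn1, hn2⟩ := hnb
      rw [InLines] at hn1 hn2
      push_neg at hn1 hn2
      exact ⟨hn1, hn2⟩
    have hswap := swap_lemma (i := i) (i' := i') hjj F2 hF2cond
    -- chain lemma
    have chain : ∀ G₁ : Finset ((Fin n × Fin n) × (Fin n × Fin n)), G₁ ⊆ F1 →
        (1 - X n) ^ (G₁.card) * ((Avoid F2).card : ℝ) ≤ ((Avoid (F2 ∪ G₁)).card : ℝ) := by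
      intro G₁
      induction G₁ using Finset.induction_on with
      | empty => intro _; simp
      | @insert a G₁' ha ihc =>
        intro hsub
        rw [Finset.insert_subset_iff] at hsub
        obtain ⟨haF1, hsub'⟩ := hsub
        have hstep := ihc hsub'
        have haF : a ∈ F := hF1F haF1
        have hG'sub : F2 ∪ G₁' ⊆ VC A :=
          Finset.union_subset (hF2F.trans hFsub) ((hsub'.trans hF1F).trans hFsub)
        have hGlt : (F2 ∪ G₁').card < F.card := by
          have hsubF : F2 ∪ G₁' ⊆ F.erase a := by
            intro f hf
            rw [Finset.mem_erase]
            rcases Finset.mem_union.mp hf with hf | hf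
            · rw [hF2, mem_filter] at hf
              refine ⟨?_, hf.1⟩
              intro hfa
              rw [hF1, mem_filter] at haF1
              rw [hfa] at hf
              exact hf.2 haF1.2
            · exact ⟨fun hfa => ha (hfa ▸ hf), hF1F (hsub' hf)⟩
          calc (F2 ∪ G₁').card ≤ (F.erase a).card := Finset.card_le_card hsubF
            _ < F.card := Finset.card_erase_lt_of_mem haF
        obtain ⟨hpos', hbnd'⟩ := ih _ hG'sub hGlt
        have ha' : a ∈ VC A := hFsub haF
        have heq : F2 ∪ insert a G₁' = insert a (F2 ∪ G₁') := by
          ext y; simp only [Finset.mem_union, Finset.mem_insert]; tauto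
        rw [heq, avoid_insert, Finset.card_insert_of_notMem ha, pow_succ]
        have hsplit := Finset.card_filter_add_card_filter_not
          (s := Avoid (F2 ∪ G₁')) (p := Occ a)
        have hb := hbnd' a ha'
        have hsplitR : (((Avoid (F2 ∪ G₁')).filter (Occ a)).card : ℝ)
            + (((Avoid (F2 ∪ G₁')).filter (fun σ => ¬ Occ a σ)).card : ℝ)
            = ((Avoid (F2 ∪ G₁')).card : ℝ) := by exact_mod_cast hsplit
        calc (1 - X n) ^ G₁'.card * (1 - X n) * ((Avoid F2).card : ℝ)
            = (1 - X n) * ((1 - X n) ^ G₁'.card * ((Avoid F2).card : ℝ)) := by ring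
          _ ≤ (1 - X n) * ((Avoid (F2 ∪ G₁')).card : ℝ) :=
              mul_le_mul_of_nonneg_left hstep (by linarith)
          _ = ((Avoid (F2 ∪ G₁')).card : ℝ) - X n * ((Avoid (F2 ∪ G₁')).card : ℝ) := by ring
          _ ≤ (((Avoid (F2 ∪ G₁')).filter (fun σ => ¬ Occ a σ)).card : ℝ) := by linarith
    -- decomposition
    have hdecomp : F2 ∪ F1 = F := by
      rw [Finset.union_comm, hF1, hF2, Finset.filter_union_filter_not_eq]
    have hchain := chain F1 (Finset.Subset.refl F1)
    rw [hdecomp] at hchain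
    -- bound on m := F1.card
    set Δ : ℝ := ((n : ℝ) - 1) / (4 * Real.exp 1) with hΔdef
    have hΔ1 : 1 ≤ Δ := by
      have z : Fin n := ⟨0, by omega⟩
      have hmem : (z, z) ∈ cls A (A z z) := by
        rw [cls, mem_filter]; exact ⟨mem_univ _, rfl⟩
      have hpos : 1 ≤ (cls A (A z z)).card := Finset.card_pos.mpr ⟨_, hmem⟩
      have := h (A z z)
      have h1 : (1 : ℝ) ≤ ((cls A (A z z)).card : ℝ) := by exact_mod_cast hpos
      linarith
    have hm0 : ((F1.card : ℝ)) ≤ 4 * n * (Δ - 1) := by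
      have hsub : F1 ⊆ (VC A).filter (Nbr e) := Finset.filter_subset_filter _ hFsub
      have h1 : (F1.card : ℝ) ≤ (((VC A).filter (Nbr e)).card : ℝ) := by
        exact_mod_cast Finset.card_le_card hsub
      exact h1.trans (nbr_count A e Δ h hΔ1)
    have hm : ((F1.card : ℝ)) ≤ (n : ℝ) * ((n : ℝ) - 1) / Real.exp 1 - 4 * n := by
      have hEpos := Real.exp_pos 1
      have : 4 * (n:ℝ) * (Δ - 1) = (n : ℝ) * ((n : ℝ) - 1) / Real.exp 1 - 4 * n := by
        rw [hΔdef]; field_simp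
      linarith
    have hpow := pow_bound hn hm
    -- combine
    have hsub2 : (Avoid F).filter (Occ e) ⊆ (Avoid F2).filter (Occ e) :=
      Finset.filter_subset_filter _ (avoid_anti hF2F)
    have hb2 : (((Avoid F).filter (Occ e)).card : ℝ)
        ≤ (((Avoid F2).filter (Occ e)).card : ℝ) := by
      exact_mod_cast Finset.card_le_card hsub2
    have hswapR : (n : ℝ) * ((n : ℝ) - 1) * (((Avoid F2).filter (Occ e)).card : ℝ)
        ≤ ((Avoid F2).card : ℝ) := by
      have := hswap
      have hcast : (((univ : Finset (Fin n)).offDiag.card *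
          ((Avoid F2).filter (Occ e)).card : ℕ) : ℝ) ≤ ((Avoid F2).card : ℝ) := by
        exact_mod_cast this
      rw [Nat.cast_mul, offdiag_card_real hn] at hcast
      exact hcast
    have hXE : X n * Real.exp (-1) * ((n : ℝ) * ((n : ℝ) - 1)) = 1 := by
      rw [X, Real.exp_neg]
      have hn1 : (n:ℝ) - 1 ≠ 0 := ne_of_gt (by linarith)
      field_simp
    have ha2nn : (0:ℝ) ≤ ((Avoid F2).card : ℝ) := Nat.cast_nonneg _
    calc (((Avoid F).filter (Occ e)).card : ℝ)
        ≤ (((Avoid F2).filter (Occ e)).card : ℝ) := hb2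
      _ ≤ X n * Real.exp (-1) * ((Avoid F2).card : ℝ) := by nlinarith
      _ = X n * (Real.exp (-1) * ((Avoid F2).card : ℝ)) := by ring
      _ ≤ X n * ((1 - X n) ^ F1.card * ((Avoid F2).card : ℝ)) :=
          mul_le_mul_of_nonneg_left (mul_le_mul_of_nonneg_right hpow ha2nn) hx0.le
      _ ≤ X n * ((Avoid F).card : ℝ) := mul_le_mul_of_nonneg_left hchain hx0.le
  refine ⟨?_, bound⟩
  rcases Finset.eq_empty_or_nonempty F with rfl | ⟨e₀, he₀⟩
  · have : Avoid (∅ : Finset ((Fin n × Fin n) × (Fin n × Fin n))) =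
        (univ : Finset (Equiv.Perm (Fin n))) := by
      rw [Avoid]
      apply Finset.filter_true_of_mem
      intro σ _ e he
      exact absurd he (Finset.notMem_empty e)
    rw [this, Finset.card_univ]
    exact Fintype.card_pos
  · set G := F.erase e₀ with hG
    have hGsub : G ⊆ VC A := (Finset.erase_subset _ _).trans hFsub
    have hGlt : G.card < F.card := Finset.card_erase_lt_of_mem he₀
    obtain ⟨hposG, hbndG⟩ := ih G hGsub hGlt
    have he₀' : e₀ ∈ VC A := hFsub he₀
    have hFeq : F = insert e₀ G := (Finset.insert_erase he₀).symm
    have hsplit := Finset.card_filter_add_card_filter_not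
      (s := Avoid G) (p := Occ e₀)
    have hb := hbndG e₀ he₀'
    have hposGR : (0:ℝ) < ((Avoid G).card : ℝ) := by exact_mod_cast hposG
    have key : (0:ℝ) < ((Avoid F).card : ℝ) := by
      rw [hFeq, avoid_insert]
      have hsplitR : (((Avoid G).filter (Occ e₀)).card : ℝ)
          + (((Avoid G).filter (fun σ => ¬ Occ e₀ σ)).card : ℝ)
          = ((Avoid G).card : ℝ) := by exact_mod_cast hsplit
      nlinarith
    exact_mod_cast key

lemma key_lemma (hn : 12 ≤ n)
    (h : ∀ s, ((cls A s).card : ℝ) ≤ ((n : ℝ) - 1) / (4 * Real.exp 1)) :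
    ∀ (N : ℕ) (F : Finset ((Fin n × Fin n) × (Fin n × Fin n))), F ⊆ VC A → F.card ≤ N →
      0 < (Avoid F).card ∧
        ∀ e ∈ VC A, (((Avoid F).filter (Occ e)).card : ℝ) ≤ X n * ((Avoid F).card : ℝ) := by
  intro N
  induction N with
  | zero =>
    intro F hFsub hFc
    apply step A hn h F hFsub
    intro G _ hGlt
    exact absurd hGlt (by omega)
  | succ N ihN =>
    intro F hFsub hFc
    apply step A hn h F hFsub
    intro G hGsub hGlt
    exact ihN G hGsub (by omega)

end ES16

/-- Erdős–Spencer: every `n × n` matrix in which every symbol appears at most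
`(n−1)/(4e)` times has a Latin transversal. -/
theorem stmt_16 (n : ℕ) {S : Type*} (A : Fin n → Fin n → S)
    (h : ∀ s : S,
      (({p : Fin n × Fin n | A p.1 p.2 = s}).ncard : ℝ)
        ≤ ((n : ℝ) - 1) / (4 * Real.exp 1)) :
    ∃ σ : Equiv.Perm (Fin n), Function.Injective fun i => A i (σ i) := by
  letI : DecidableEq S := Classical.decEq S
  have hcls : ∀ s, ((ES16.cls A s).card : ℝ) ≤ ((n : ℝ) - 1) / (4 * Real.exp 1) := by
    intro s
    have heq : {p : Fin n × Fin n | A p.1 p.2 = s} = ↑(ES16.cls A s) := by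
      ext p; simp [ES16.cls]
    have hh := h s
    rw [heq, Set.ncard_coe_finset] at hh
    exact hh
  rcases Nat.lt_or_ge n 12 with hn | hn
  · rcases Nat.eq_zero_or_pos n with rfl | hpos
    · exact ⟨1, fun a b _ => Subsingleton.elim a b⟩
    · exfalso
      set z : Fin n := ⟨0, hpos⟩ with hz
      have hmem : (z, z) ∈ ES16.cls A (A z z) := by
        rw [ES16.cls, Finset.mem_filter]; exact ⟨Finset.mem_univ _, rfl⟩
      have h1 : 1 ≤ (ES16.cls A (A z z)).card := Finset.card_pos.mpr ⟨_, hmem⟩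
      have h1R : (1:ℝ) ≤ ((ES16.cls A (A z z)).card : ℝ) := by exact_mod_cast h1
      have h2 := hcls (A z z)
      have hnR : ((n:ℝ)) ≤ 11 := by exact_mod_cast Nat.lt_succ_iff.mp hn
      have hE := Real.exp_one_gt_d9
      have hEpos := Real.exp_pos 1
      have h3 : (1:ℝ) ≤ ((n:ℝ) - 1) / (4 * Real.exp 1) := le_trans h1R h2
      rw [le_div_iff₀ (by positivity)] at h3
      nlinarith
  · obtain ⟨hpos, -⟩ := ES16.key_lemma A hn hcls (ES16.VC A).card (ES16.VC A)
      (Finset.Subset.refl _) le_rfl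
    obtain ⟨σ, hσ⟩ := Finset.card_pos.mp hpos
    rw [ES16.mem_avoid] at hσ
    refine ⟨σ, ?_⟩
    intro a b hab
    rcases lt_trichotomy a b with hlt | heq | hgt
    · exfalso
      have hne : σ a ≠ σ b := fun hc => (ne_of_lt hlt) (σ.injective hc)
      have he : ((a, σ a), (b, σ b)) ∈ ES16.VC A := by
        rw [ES16.VC, Finset.mem_filter]
        exact ⟨Finset.mem_univ _, hlt, hne, hab⟩
      exact hσ _ he ⟨rfl, rfl⟩
    · exact heq
    · exfalso
      have hne : σ b ≠ σ a := fun hc => (ne_of_lt hgt) (σ.injective hc)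
      have he : ((b, σ b), (a, σ a)) ∈ ES16.VC A := by
        rw [ES16.VC, Finset.mem_filter]
        exact ⟨Finset.mem_univ _, hgt, hne, hab.symm⟩
      exact hσ _ he ⟨rfl, rfl⟩
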